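/- Define F(n) for n ≥ 0 by: if n = m(m+1)/2 + k with m ≥ 0 and 0 ≤ k ≤ m, then F(n) = m(m+1)(m+2)(3m+5)/24 + k(n+m-k+1) + k(k+1)/2. Then F satisfies F(0) = 0 and for all n ≥ 0, F(n+1) = F(n) + n + m' + 2, where m' is the unique integer with m'(m'+1)/2 ≤ n < (m'+1)(m'+2)/2. -/
import Mathlib


/-- The closed form value for `n = m (m+1)/2 + k`:
`F(n) = m(m+1)(m+2)(3m+5)/24 + k (n + m - k + 1) + k(k+1)/2`. -/
def Fval (m k : ℕ) : ℕ :=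
  m * (m + 1) * (m + 2) * (3 * m + 5) / 24
    + k * (m * (m + 1) / 2 + k + m - k + 1) + k * (k + 1) / 2

/-- The unique `m` with `m(m+1)/2 ≤ n < (m+1)(m+2)/2`. -/
def triIdx (n : ℕ) : ℕ := (Nat.sqrt (8 * n + 1) - 1) / 2

/-- `F n`, computed via the triangular decomposition of `n`. -/
def F (n : ℕ) : ℕ := Fval (triIdx n) (n - triIdx n * (triIdx n + 1) / 2)

lemma two_dvd (m : ℕ) : ∃ t, m * (m + 1) = 2 * t := by
  obtain ⟨r, hr⟩ := Nat.even_mul_succ_self m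
  exact ⟨r, hr.trans (two_mul r).symm⟩

lemma even_pair (a b : ℕ) (h : b = a + 1) : ∃ t, a * b = 2 * t := by
  subst h; exact two_dvd a

lemma div24 (m : ℕ) : ∃ a, m * (m + 1) * (m + 2) * (3 * m + 5) = 24 * a := by
  induction m with
  | zero => exact ⟨0, by norm_num⟩
  | succ m ih =>
    obtain ⟨a, ha⟩ := ih
    obtain ⟨t, ht⟩ := two_dvd m
    refine ⟨a + (m + 2) * (t + m + 1), ?_⟩
    zify at ha ht ⊢
    linear_combination ha + (12 * ((m : ℤ) + 2)) * ht

lemma Fval_eq (m k a t c : ℕ) (ha : m * (m + 1) * (m + 2) * (3 * m + 5) = 24 * a)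
    (ht : m * (m + 1) = 2 * t) (hc : k * (k + 1) = 2 * c) :
    Fval m k = a + k * (t + m + 1) + c := by
  unfold Fval
  rw [ha, ht, hc]
  have h1 : 2 * t / 2 + k + m - k + 1 = t + m + 1 := by omega
  have h2 : 24 * a / 24 = a := by omega
  have h3 : 2 * c / 2 = c := by omega
  rw [h1, h2, h3]

lemma triIdx_eq (n m : ℕ) (h1 : m * (m + 1) / 2 ≤ n) (h2 : n < (m + 1) * (m + 2) / 2) :
    triIdx n = m := by
  obtain ⟨t, ht⟩ := two_dvd m
  obtain ⟨u, hu⟩ := even_pair (m + 1) (m + 2) rfl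
  rw [ht] at h1
  rw [hu] at h2
  have hlo : (2 * m + 1) * (2 * m + 1) ≤ 8 * n + 1 := by
    have e : (2 * m + 1) * (2 * m + 1) = 4 * (m * (m + 1)) + 1 := by ring
    rw [e, ht]; omega
  have hhi : 8 * n + 1 < (2 * m + 3) * (2 * m + 3) := by
    have e : (2 * m + 3) * (2 * m + 3) = 4 * ((m + 1) * (m + 2)) + 1 := by ring
    rw [e, hu]; omega
  have l1 : 2 * m + 1 ≤ Nat.sqrt (8 * n + 1) := Nat.le_sqrt.mpr hlo
  have l2 : Nat.sqrt (8 * n + 1) < 2 * m + 3 := Nat.sqrt_lt.mpr hhi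
  unfold triIdx
  omega

/-- `F 0 = 0` and `F (n+1) = F n + n + m' + 2` where `m'` is the unique integer
with `m'(m'+1)/2 ≤ n < (m'+1)(m'+2)/2`. -/
theorem F_recurrence :
    F 0 = 0 ∧ ∀ n m' : ℕ, m' * (m' + 1) / 2 ≤ n → n < (m' + 1) * (m' + 2) / 2 →
      F (n + 1) = F n + n + m' + 2 := by
  constructor
  · decide
  intro n m' h1 h2
  have htri : triIdx n = m' := triIdx_eq n m' h1 h2
  obtain ⟨a, ha⟩ := div24 m'
  obtain ⟨t, ht⟩ := two_dvd m'
  obtain ⟨u, hu⟩ := even_pair (m' + 1) (m' + 2) rfl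
  have h1' : t ≤ n := by rw [ht] at h1; omega
  have h2' : n < u := by rw [hu] at h2; omega
  have hu2 : 2 * u = 2 * t + 2 * (m' + 1) := by
    rw [← hu, ← ht]; ring
  set k := n - t with hk
  have e1 : ∀ c, k * (k + 1) = 2 * c → F n = a + k * (t + m' + 1) + c := by
    intro c hc
    unfold F
    rw [htri, ht]
    have : n - 2 * t / 2 = k := by omega
    rw [this]
    exact Fval_eq m' k a t c ha ht hc
  rcases (by omega : k < m' ∨ k = m') with hkm | hkm
  · -- n+1 stays in triangle m'
    obtain ⟨c, hc⟩ := two_dvd k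
    obtain ⟨d, hd⟩ := two_dvd (k + 1)
    have b1 : m' * (m' + 1) / 2 ≤ n + 1 := le_trans h1 (by omega)
    have b2 : n + 1 < (m' + 1) * (m' + 2) / 2 := by rw [hu]; omega
    have ht2 : triIdx (n + 1) = m' := triIdx_eq (n + 1) m' b1 b2
    have e2 : F (n + 1) = a + (k + 1) * (t + m' + 1) + d := by
      unfold F
      rw [ht2, ht]
      have : n + 1 - 2 * t / 2 = k + 1 := by omega
      rw [this]
      exact Fval_eq m' (k + 1) a t d ha ht hd
    have hdc : d = c + k + 1 := by
      have e : (k + 1) * (k + 1 + 1) = k * (k + 1) + 2 * (k + 1) := by ring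
      rw [hd, hc] at e
      omega
    rw [e2, e1 c hc]
    have hsm : (k + 1) * (t + m' + 1) = k * (t + m' + 1) + (t + m' + 1) := by ring
    rw [hsm]
    have hn : n = t + k := by omega
    generalize k * (t + m' + 1) = X
    omega
  · -- n+1 starts triangle m'+1
    obtain ⟨a', ha'⟩ := div24 (m' + 1)
    obtain ⟨v, hv⟩ := even_pair (m' + 2) (m' + 3) rfl
    have hv2 : 2 * v = 2 * u + 2 * (m' + 2) := by
      rw [← hv, ← hu]; ring
    have hn : n = t + m' := by omega
    have b1 : (m' + 1) * (m' + 2) / 2 ≤ n + 1 := by rw [hu]; omega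
    have b2 : n + 1 < (m' + 2) * (m' + 3) / 2 := by rw [hv]; omega
    have ht2 : triIdx (n + 1) = m' + 1 := triIdx_eq (n + 1) (m' + 1) b1 b2
    obtain ⟨u0, hu0⟩ := two_dvd (m' + 1)
    have huu : u0 = u := by rw [hu] at hu0; omega
    subst huu
    have e2 : F (n + 1) = a' + 0 * (u0 + (m' + 1) + 1) + 0 := by
      unfold F
      rw [ht2, hu0]
      have : n + 1 - 2 * u0 / 2 = 0 := by omega
      rw [this]
      exact Fval_eq (m' + 1) 0 a' u0 0 ha' hu0 (by norm_num)
    have key : 24 * a' = 24 * a + 24 * ((m' + 2) * (t + m' + 1)) := by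
      zify at ha ha' ht ⊢
      linear_combination (-1 : ℤ) * ha' + ha + (12 * ((m' : ℤ) + 2)) * ht
    have hsm : (m' + 2) * (t + m' + 1) = m' * (t + m' + 1) + 2 * (t + m' + 1) := by ring
    have hck : k * (k + 1) = 2 * t := by rw [hkm]; exact ht
    rw [e2, e1 t hck, hkm]
    rw [hsm] at key
    generalize m' * (t + m' + 1) = X at key ⊢
    omega
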